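/- Let Γ be a bounded simple smooth curve in ℝ², i.e. Γ is the image of a continuously differentiable injection h : [φ₁,∞) → ℝ², and assume the lower box dimension of Γ is strictly greater than 1. Let φ̄₁ > φ₁ and Γ₁ := h((φ̄₁,∞)). Then the lower box dimension d̲ and upper box dimension d̄ of Γ₁ equal those of Γ, and M_*^{d̲}(Γ₁) = M_*^{d̲}(Γ) and M^{*d̄}(Γ₁) = M^{*d̄}(Γ). The analogous statement holds for the radial box dimensions and radial Minkowski contents: if the lower radial box dimension of Γ exceeds 1, then the lower and upper radial box dimensions of Γ₁ equal those of Γ, and the corresponding lower and upper radial Minkowski contents of Γ₁ and Γ coincide. -/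

import Mathlib

open MeasureTheory Filter Metric Set Topology ENNReal

noncomputable section

/-- The Euclidean plane `ℝ²`. -/
abbrev E2 := EuclideanSpace ℝ (Fin 2)

/-- The point of the Euclidean plane with coordinates `a`, `b`. -/
def pt (a b : ℝ) : E2 := (WithLp.equiv 2 (Fin 2 → ℝ)).symm ![a, b]

/-- The lower `s`-dimensional Minkowski content of `A ⊆ ℝ²`:
`liminf_{ε→0⁺} |A_ε| / ε^(2-s)`, where `A_ε` is the open `ε`-neighbourhood of `A`. -/
def lowerMink (s : ℝ) (A : Set E2) : ℝ≥0∞ :=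
  Filter.liminf (fun ε : ℝ => volume (Metric.thickening ε A) / ENNReal.ofReal (ε ^ (2 - s)))
    (𝓝[>] (0:ℝ))

/-- The upper `s`-dimensional Minkowski content of `A ⊆ ℝ²`. -/
def upperMink (s : ℝ) (A : Set E2) : ℝ≥0∞ :=
  Filter.limsup (fun ε : ℝ => volume (Metric.thickening ε A) / ENNReal.ofReal (ε ^ (2 - s)))
    (𝓝[>] (0:ℝ))

/-- The lower box dimension of `A ⊆ ℝ²`. -/
def lowerDimB (A : Set E2) : ℝ := sInf {s : ℝ | 0 ≤ s ∧ lowerMink s A = 0}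

/-- The upper box dimension of `A ⊆ ℝ²`. -/
def upperDimB (A : Set E2) : ℝ := sInf {s : ℝ | 0 ≤ s ∧ upperMink s A = 0}

/-- The box dimension of `A` exists and equals `d`. -/
def dimBEq (A : Set E2) (d : ℝ) : Prop := lowerDimB A = d ∧ upperDimB A = d

/-- `A` is Minkowski nondegenerate for the dimension `d`:
`0 < M_*^d(A) ≤ M^{*d}(A) < ∞`. -/
def minkNondeg (A : Set E2) (d : ℝ) : Prop := 0 < lowerMink d A ∧ upperMink d A < ⊤

/-- `A` is Minkowski measurable with `d`-dimensional Minkowski content the value `v ∈ (0,∞)`. -/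
def minkMeasurableWith (A : Set E2) (d v : ℝ) : Prop :=
  0 < v ∧ lowerMink d A = ENNReal.ofReal v ∧ upperMink d A = ENNReal.ofReal v

/-- The graph of `g` over `S ⊆ ℝ`, as a subset of the plane. -/
def graphOn (g : ℝ → ℝ) (S : Set ℝ) : Set E2 := (fun t => pt t (g t)) '' S

/-- The curve `τ ↦ (X τ, Y τ)`, `τ ≥ τ₀`, as a subset of the plane. -/
def curveFrom (X Y : ℝ → ℝ) (τ₀ : ℝ) : Set E2 := (fun τ => pt (X τ) (Y τ)) '' Set.Ici τ₀

/-- The radial `ε`-neighbourhood of `A ⊆ ℝ²`: the set of points `y` whose distance to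
`A ∩ {t • y : t ≥ 0}` is `< ε`. -/
def rayNbhd (ε : ℝ) (A : Set E2) : Set E2 :=
  {y | ∃ z ∈ A, (∃ t : ℝ, 0 ≤ t ∧ z = t • y) ∧ dist y z < ε}

/-- The radial lower `s`-dimensional Minkowski content. -/
def radLowerMink (s : ℝ) (A : Set E2) : ℝ≥0∞ :=
  Filter.liminf (fun ε : ℝ => volume (rayNbhd ε A) / ENNReal.ofReal (ε ^ (2 - s))) (𝓝[>] (0:ℝ))

/-- The radial upper `s`-dimensional Minkowski content. -/
def radUpperMink (s : ℝ) (A : Set E2) : ℝ≥0∞ :=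
  Filter.limsup (fun ε : ℝ => volume (rayNbhd ε A) / ENNReal.ofReal (ε ^ (2 - s))) (𝓝[>] (0:ℝ))

/-- The radial lower box dimension. -/
def radLowerDimB (A : Set E2) : ℝ := sInf {s : ℝ | 0 ≤ s ∧ radLowerMink s A = 0}

/-- The radial upper box dimension. -/
def radUpperDimB (A : Set E2) : ℝ := sInf {s : ℝ | 0 ≤ s ∧ radUpperMink s A = 0}

/-- The radial box dimension of `A` exists and equals `d`. -/
def radDimBEq (A : Set E2) (d : ℝ) : Prop := radLowerDimB A = d ∧ radUpperDimB A = d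

/-- The spiral `r = f(φ)` in polar coordinates, over the set of angles `S`. -/
def spiralArc (f : ℝ → ℝ) (S : Set ℝ) : Set E2 :=
  (fun φ => pt (f φ * Real.cos φ) (f φ * Real.sin φ)) '' S

/-- `u(x) ≃₁ v(x)` as `x → 0⁺`: `u/v → 1` and `u'/v' → 1` as `x → 0⁺`. -/
def asympOneZero (u v : ℝ → ℝ) : Prop :=
  Tendsto (fun x => u x / v x) (𝓝[>] (0:ℝ)) (𝓝 1) ∧
  Tendsto (fun x => deriv u x / deriv v x) (𝓝[>] (0:ℝ)) (𝓝 1)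

namespace ExcisionAux

/-- The Minkowski quotient of a "volume" function `V`. -/
def mq (V : ℝ → ℝ≥0∞) (s : ℝ) : ℝ → ℝ≥0∞ := fun ε => V ε / ENNReal.ofReal (ε ^ (2 - s))

lemma Ioo_mem : Ioo (0:ℝ) 1 ∈ 𝓝[>] (0:ℝ) :=
  Ioo_mem_nhdsGT_of_mem ⟨le_refl 0, one_pos⟩

lemma mq_anti {V : ℝ → ℝ≥0∞} {s s' : ℝ} (hss : s ≤ s') :
    ∀ᶠ ε in 𝓝[>] (0:ℝ), mq V s' ε ≤ mq V s ε := by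
  filter_upwards [Ioo_mem] with ε hε
  exact ENNReal.div_le_div le_rfl (ENNReal.ofReal_le_ofReal
    (Real.rpow_le_rpow_of_exponent_ge hε.1 hε.2.le (by linarith)))

lemma tendsto_ofReal_rpow {p : ℝ} (hp : 0 < p) :
    Tendsto (fun ε : ℝ => ENNReal.ofReal (ε ^ p)) (𝓝[>] (0:ℝ)) (𝓝 0) := by
  have h1 : Tendsto (fun ε : ℝ => ε ^ p) (𝓝[>] (0:ℝ)) (𝓝 0) := by
    have h := (Real.continuousAt_rpow_const 0 p (Or.inr hp.le)).tendsto
    rw [Real.zero_rpow hp.ne'] at h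
    exact h.mono_left nhdsWithin_le_nhds
  simpa using ENNReal.tendsto_ofReal h1

lemma tendsto_mq_zero_of_linear {W : ℝ → ℝ≥0∞} {C s : ℝ} (hC : 0 ≤ C) (hs : 1 < s)
    (hW : ∀ ε ∈ Ioo (0:ℝ) 1, W ε ≤ ENNReal.ofReal (C * ε)) :
    Tendsto (mq W s) (𝓝[>] (0:ℝ)) (𝓝 0) := by
  have key : ∀ᶠ ε in 𝓝[>] (0:ℝ), mq W s ε ≤ ENNReal.ofReal C * ENNReal.ofReal (ε ^ (s - 1)) := by
    filter_upwards [Ioo_mem] with ε hε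
    have hε0 : (0:ℝ) < ε := hε.1
    have hd : (0:ℝ) < ε ^ (2 - s) := Real.rpow_pos_of_pos hε0 _
    have e1 : ε ^ (s - 1) = ε / ε ^ (2 - s) := by
      have e : s - 1 = (1:ℝ) - (2 - s) := by ring
      rw [e, Real.rpow_sub hε0, Real.rpow_one]
    calc mq W s ε ≤ ENNReal.ofReal (C * ε) / ENNReal.ofReal (ε ^ (2 - s)) :=
          ENNReal.div_le_div (hW ε hε) le_rfl
      _ = ENNReal.ofReal C * ENNReal.ofReal (ε ^ (s - 1)) := by
          rw [ENNReal.ofReal_mul hC, e1, ENNReal.ofReal_div_of_pos hd, mul_div_assoc]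
  have h2 : Tendsto (fun ε : ℝ => ENNReal.ofReal C * ENNReal.ofReal (ε ^ (s - 1)))
      (𝓝[>] (0:ℝ)) (𝓝 0) := by
    have h := ENNReal.Tendsto.const_mul (a := ENNReal.ofReal C) (tendsto_ofReal_rpow (by linarith : (0:ℝ) < s - 1))
      (Or.inr ENNReal.ofReal_ne_top)
    simpa using h
  exact tendsto_of_tendsto_of_tendsto_of_le_of_le' tendsto_const_nhds h2
    (Eventually.of_forall fun _ => zero_le) key

lemma tendsto_mq_zero_of_bounded {V : ℝ → ℝ≥0∞} {M : ℝ≥0∞} (hM : M ≠ ⊤)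
    (hV : ∀ ε ∈ Ioo (0:ℝ) 1, V ε ≤ M) {s : ℝ} (hs : 2 < s) :
    Tendsto (mq V s) (𝓝[>] (0:ℝ)) (𝓝 0) := by
  have key : ∀ᶠ ε in 𝓝[>] (0:ℝ), mq V s ε ≤ M * ENNReal.ofReal (ε ^ (s - 2)) := by
    filter_upwards [Ioo_mem] with ε hε
    have hd : (0:ℝ) < ε ^ (2 - s) := Real.rpow_pos_of_pos hε.1 _
    have e1 : ENNReal.ofReal (ε ^ (s - 2)) = (ENNReal.ofReal (ε ^ (2 - s)))⁻¹ := by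
      rw [← ENNReal.ofReal_inv_of_pos hd]
      congr 1
      have e : s - 2 = -(2 - s) := by ring
      rw [e, Real.rpow_neg hε.1.le]
    calc mq V s ε ≤ M / ENNReal.ofReal (ε ^ (2 - s)) := ENNReal.div_le_div (hV ε hε) le_rfl
      _ = M * ENNReal.ofReal (ε ^ (s - 2)) := by rw [e1, div_eq_mul_inv]
  have h2 : Tendsto (fun ε : ℝ => M * ENNReal.ofReal (ε ^ (s - 2))) (𝓝[>] (0:ℝ)) (𝓝 0) := by
    have h := ENNReal.Tendsto.const_mul (a := M) (tendsto_ofReal_rpow (by linarith : (0:ℝ) < s - 2))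
      (Or.inr hM)
    simpa using h
  exact tendsto_of_tendsto_of_tendsto_of_le_of_le' tendsto_const_nhds h2
    (Eventually.of_forall fun _ => zero_le) key

lemma liminf_le_liminf_of_tendsto_zero {f g w : ℝ → ℝ≥0∞}
    (hw : Tendsto w (𝓝[>] (0:ℝ)) (𝓝 0))
    (hfg : ∀ᶠ ε in 𝓝[>] (0:ℝ), f ε ≤ g ε + w ε) :
    liminf f (𝓝[>] (0:ℝ)) ≤ liminf g (𝓝[>] (0:ℝ)) := by
  refine ENNReal.le_of_forall_pos_le_add fun δ hδ _ => ?_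
  have hwδ : ∀ᶠ ε in 𝓝[>] (0:ℝ), w ε ≤ (δ : ℝ≥0∞) := by
    have hm : Iio (δ : ℝ≥0∞) ∈ 𝓝 (0 : ℝ≥0∞) :=
      Iio_mem_nhds (by exact_mod_cast hδ)
    filter_upwards [hw hm] with ε hε using le_of_lt hε
  have h1 : liminf f (𝓝[>] (0:ℝ)) ≤ liminf (fun ε => g ε + (δ : ℝ≥0∞)) (𝓝[>] (0:ℝ)) :=
    liminf_le_liminf (by
      filter_upwards [hfg, hwδ] with ε h1 h2 using h1.trans (add_le_add le_rfl h2))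
  rwa [liminf_add_const (𝓝[>] (0:ℝ)) g (δ : ℝ≥0∞) (by apply isCobounded_ge_of_top)
    (by apply isBounded_ge_of_bot)] at h1

lemma limsup_le_limsup_of_tendsto_zero {f g w : ℝ → ℝ≥0∞}
    (hw : Tendsto w (𝓝[>] (0:ℝ)) (𝓝 0))
    (hfg : ∀ᶠ ε in 𝓝[>] (0:ℝ), f ε ≤ g ε + w ε) :
    limsup f (𝓝[>] (0:ℝ)) ≤ limsup g (𝓝[>] (0:ℝ)) := by
  refine ENNReal.le_of_forall_pos_le_add fun δ hδ _ => ?_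
  have hwδ : ∀ᶠ ε in 𝓝[>] (0:ℝ), w ε ≤ (δ : ℝ≥0∞) := by
    have hm : Iio (δ : ℝ≥0∞) ∈ 𝓝 (0 : ℝ≥0∞) :=
      Iio_mem_nhds (by exact_mod_cast hδ)
    filter_upwards [hw hm] with ε hε using le_of_lt hε
  have h1 : limsup f (𝓝[>] (0:ℝ)) ≤ limsup (fun ε => g ε + (δ : ℝ≥0∞)) (𝓝[>] (0:ℝ)) :=
    limsup_le_limsup (by
      filter_upwards [hfg, hwδ] with ε h1 h2 using h1.trans (add_le_add le_rfl h2))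
  rwa [limsup_add_const (𝓝[>] (0:ℝ)) g (δ : ℝ≥0∞) (by apply isBounded_le_of_top)
    (by apply isCobounded_le_of_bot)] at h1

lemma excision_at {V V₁ W : ℝ → ℝ≥0∞} {s : ℝ}
    (hle : ∀ ε ∈ Ioo (0:ℝ) 1, V₁ ε ≤ V ε)
    (hsplit : ∀ ε ∈ Ioo (0:ℝ) 1, V ε ≤ V₁ ε + W ε)
    (hWt : Tendsto (mq W s) (𝓝[>] (0:ℝ)) (𝓝 0)) :
    liminf (mq V₁ s) (𝓝[>] (0:ℝ)) = liminf (mq V s) (𝓝[>] (0:ℝ)) ∧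
    limsup (mq V₁ s) (𝓝[>] (0:ℝ)) = limsup (mq V s) (𝓝[>] (0:ℝ)) := by
  have hmono : ∀ᶠ ε in 𝓝[>] (0:ℝ), mq V₁ s ε ≤ mq V s ε := by
    filter_upwards [Ioo_mem] with ε hε using ENNReal.div_le_div (hle ε hε) le_rfl
  have hsp : ∀ᶠ ε in 𝓝[>] (0:ℝ), mq V s ε ≤ mq V₁ s ε + mq W s ε := by
    filter_upwards [Ioo_mem] with ε hε
    calc mq V s ε ≤ (V₁ ε + W ε) / ENNReal.ofReal (ε ^ (2 - s)) :=
          ENNReal.div_le_div (hsplit ε hε) le_rfl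
      _ = mq V₁ s ε + mq W s ε := ENNReal.add_div
  exact ⟨le_antisymm (liminf_le_liminf hmono) (liminf_le_liminf_of_tendsto_zero hWt hsp),
    le_antisymm (limsup_le_limsup hmono) (limsup_le_limsup_of_tendsto_zero hWt hsp)⟩

lemma sInf_excision {P P₁ : ℝ → Prop}
    (hmono₁ : ∀ s s' : ℝ, s ≤ s' → P₁ s → P₁ s')
    (hagree : ∀ s : ℝ, 1 < s → (P s ↔ P₁ s))
    (h3 : P 3)
    (hdim : 1 < sInf {s : ℝ | 0 ≤ s ∧ P s}) :
    sInf {s : ℝ | 0 ≤ s ∧ P₁ s} = sInf {s : ℝ | 0 ≤ s ∧ P s} := by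
  set S := {s : ℝ | 0 ≤ s ∧ P s} with hSdef
  set S₁ := {s : ℝ | 0 ≤ s ∧ P₁ s} with hS₁def
  have hbS : BddBelow S := ⟨0, fun x hx => hx.1⟩
  have hbS₁ : BddBelow S₁ := ⟨0, fun x hx => hx.1⟩
  have hS3 : (3:ℝ) ∈ S := ⟨by norm_num, h3⟩
  have hsub : S ⊆ S₁ := by
    intro s hs
    have hds : sInf S ≤ s := csInf_le hbS hs
    exact ⟨hs.1, (hagree s (lt_of_lt_of_le hdim hds)).1 hs.2⟩
  have hlb : ∀ s ∈ S₁, sInf S ≤ s := by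
    intro s hs
    by_contra hc
    push_neg at hc
    by_cases h1 : 1 < s
    · exact absurd (csInf_le hbS ⟨hs.1, (hagree s h1).2 hs.2⟩) (not_le.mpr hc)
    · push_neg at h1
      have ht1 : 1 < (1 + sInf S) / 2 := by linarith
      have htd : (1 + sInf S) / 2 < sInf S := by linarith
      have hmem : (1 + sInf S) / 2 ∈ S :=
        ⟨by linarith, (hagree _ ht1).2 (hmono₁ s _ (by linarith) hs.2)⟩
      exact absurd (csInf_le hbS hmem) (not_le.mpr htd)
  exact le_antisymm (csInf_le_csInf hbS₁ ⟨3, hS3⟩ hsub) (le_csInf ⟨3, hsub hS3⟩ hlb)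

lemma main_abstract (V V₁ W : ℝ → ℝ≥0∞) {C : ℝ} (hC : 0 ≤ C)
    (hle : ∀ ε ∈ Ioo (0:ℝ) 1, V₁ ε ≤ V ε)
    (hsplit : ∀ ε ∈ Ioo (0:ℝ) 1, V ε ≤ V₁ ε + W ε)
    (hW : ∀ ε ∈ Ioo (0:ℝ) 1, W ε ≤ ENNReal.ofReal (C * ε))
    {M : ℝ≥0∞} (hM : M ≠ ⊤) (hV : ∀ ε ∈ Ioo (0:ℝ) 1, V ε ≤ M)
    (hdim : 1 < sInf {s : ℝ | 0 ≤ s ∧ liminf (mq V s) (𝓝[>] (0:ℝ)) = 0}) :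
    (∀ s : ℝ, 1 < s →
       liminf (mq V₁ s) (𝓝[>] (0:ℝ)) = liminf (mq V s) (𝓝[>] (0:ℝ)) ∧
       limsup (mq V₁ s) (𝓝[>] (0:ℝ)) = limsup (mq V s) (𝓝[>] (0:ℝ))) ∧
    sInf {s : ℝ | 0 ≤ s ∧ liminf (mq V₁ s) (𝓝[>] (0:ℝ)) = 0}
      = sInf {s : ℝ | 0 ≤ s ∧ liminf (mq V s) (𝓝[>] (0:ℝ)) = 0} ∧
    sInf {s : ℝ | 0 ≤ s ∧ limsup (mq V₁ s) (𝓝[>] (0:ℝ)) = 0}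
      = sInf {s : ℝ | 0 ≤ s ∧ limsup (mq V s) (𝓝[>] (0:ℝ)) = 0} ∧
    1 < sInf {s : ℝ | 0 ≤ s ∧ limsup (mq V s) (𝓝[>] (0:ℝ)) = 0} := by
  have hV₁b : ∀ ε ∈ Ioo (0:ℝ) 1, V₁ ε ≤ M := fun ε hε => (hle ε hε).trans (hV ε hε)
  have key : ∀ s : ℝ, 1 < s →
      liminf (mq V₁ s) (𝓝[>] (0:ℝ)) = liminf (mq V s) (𝓝[>] (0:ℝ)) ∧
      limsup (mq V₁ s) (𝓝[>] (0:ℝ)) = limsup (mq V s) (𝓝[>] (0:ℝ)) :=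
    fun s hs => excision_at hle hsplit (tendsto_mq_zero_of_linear hC hs hW)
  have h3low : liminf (mq V 3) (𝓝[>] (0:ℝ)) = 0 :=
    (tendsto_mq_zero_of_bounded hM hV (by norm_num)).liminf_eq
  have h3up : limsup (mq V 3) (𝓝[>] (0:ℝ)) = 0 :=
    (tendsto_mq_zero_of_bounded hM hV (by norm_num)).limsup_eq
  have monoLi : ∀ (U : ℝ → ℝ≥0∞) (s s' : ℝ), s ≤ s' →
      liminf (mq U s) (𝓝[>] (0:ℝ)) = 0 → liminf (mq U s') (𝓝[>] (0:ℝ)) = 0 := by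
    intro U s s' hss hz
    have hle' := liminf_le_liminf (mq_anti (V := U) hss)
    rw [hz] at hle'
    exact le_antisymm hle' zero_le
  have monoLs : ∀ (U : ℝ → ℝ≥0∞) (s s' : ℝ), s ≤ s' →
      limsup (mq U s) (𝓝[>] (0:ℝ)) = 0 → limsup (mq U s') (𝓝[>] (0:ℝ)) = 0 := by
    intro U s s' hss hz
    have hle' := limsup_le_limsup (mq_anti (V := U) hss)
    rw [hz] at hle'
    exact le_antisymm hle' zero_le
  have hdimup : 1 < sInf {s : ℝ | 0 ≤ s ∧ limsup (mq V s) (𝓝[>] (0:ℝ)) = 0} := by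
    refine lt_of_lt_of_le hdim (csInf_le_csInf ⟨0, fun x hx => hx.1⟩ ⟨3, by norm_num, h3up⟩ ?_)
    rintro s ⟨hs0, hs⟩
    exact ⟨hs0, le_antisymm (le_trans (liminf_le_limsup) hs.le) zero_le⟩
  refine ⟨key, ?_, ?_, hdimup⟩
  · exact sInf_excision (fun s s' hss => monoLi V₁ s s' hss)
      (fun s hs => ⟨fun hz => ((key s hs).1).trans hz, fun hz => ((key s hs).1).symm.trans hz⟩) h3low hdim
  · exact sInf_excision (fun s s' hss => monoLs V₁ s s' hss)
      (fun s hs => ⟨fun hz => ((key s hs).2).trans hz, fun hz => ((key s hs).2).symm.trans hz⟩) h3up hdimup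

lemma volume_thickening_image_Icc_le {a b : ℝ} (hab : a ≤ b) (h : ℝ → E2) (L : NNReal)
    (hlip : LipschitzOnWith L h (Icc a b)) :
    ∃ C : ℝ, 0 ≤ C ∧ ∀ ε ∈ Ioo (0:ℝ) 1,
      volume (thickening ε (h '' Icc a b)) ≤ ENNReal.ofReal (C * ε) := by
  set B : ℝ≥0∞ := volume (ball (0:E2) 1) with hBdef
  have hBfin : B ≠ ⊤ := measure_ball_lt_top.ne
  refine ⟨(b - a + 2) * ((L:ℝ) + 1) ^ 2 * B.toReal,
    mul_nonneg (mul_nonneg (by linarith) (by positivity)) ENNReal.toReal_nonneg, ?_⟩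
  rintro ε ⟨hε0, hε1⟩
  set n : ℕ := ⌈(b - a) / ε⌉₊ with hndef
  have hcover : thickening ε (h '' Icc a b) ⊆
      ⋃ i ∈ Finset.range (n + 1), ball (h (a + i * ε)) (((L:ℝ) + 1) * ε) := by
    intro y hy
    rw [mem_thickening_iff] at hy
    obtain ⟨z, ⟨t, ht, rfl⟩, hdist⟩ := hy
    set i : ℕ := ⌊(t - a) / ε⌋₊ with hidef
    have hta : 0 ≤ (t - a) / ε := div_nonneg (by linarith [ht.1]) hε0.le
    have hile : (i:ℝ) ≤ (t - a) / ε := Nat.floor_le hta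
    have hi1 : (t - a) / ε < (i:ℝ) + 1 := Nat.lt_floor_add_one _
    have hti : a + (i:ℝ) * ε ≤ t := by
      have h2 := mul_le_mul_of_nonneg_right hile hε0.le
      rw [div_mul_cancel₀ _ hε0.ne'] at h2
      linarith
    have hti2 : t - (a + (i:ℝ) * ε) < ε := by
      have h2 := mul_lt_mul_of_pos_right hi1 hε0
      rw [div_mul_cancel₀ _ hε0.ne'] at h2
      have h3 : ((i:ℝ) + 1) * ε = (i:ℝ) * ε + ε := by ring
      linarith
    have hmem : a + (i:ℝ) * ε ∈ Icc a b := by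
      constructor
      · linarith [mul_nonneg (Nat.cast_nonneg i : (0:ℝ) ≤ i) hε0.le]
      · linarith [ht.2]
    have hin : i < n + 1 := by
      have hle2 : (t - a) / ε ≤ (b - a) / ε := by gcongr; exact ht.2
      have : i ≤ n := (Nat.floor_le_ceil _).trans (Nat.ceil_le_ceil hle2)
      omega
    refine mem_biUnion (Finset.mem_range.mpr hin) ?_
    rw [mem_ball]
    have hd2 : dist (h t) (h (a + (i:ℝ) * ε)) ≤ (L:ℝ) * ε := by
      have h3 := hlip.dist_le_mul t ht (a + (i:ℝ) * ε) hmem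
      have h4 : dist t (a + (i:ℝ) * ε) ≤ ε := by
        rw [Real.dist_eq, abs_of_nonneg (by linarith)]
        linarith
      calc dist (h t) (h (a + (i:ℝ) * ε)) ≤ (L:ℝ) * dist t (a + (i:ℝ) * ε) := h3
        _ ≤ (L:ℝ) * ε := mul_le_mul_of_nonneg_left h4 L.coe_nonneg
    calc dist y (h (a + (i:ℝ) * ε)) ≤ dist y (h t) + dist (h t) (h (a + (i:ℝ) * ε)) :=
          dist_triangle _ _ _
      _ < ε + (L:ℝ) * ε := by linarith
      _ = ((L:ℝ) + 1) * ε := by ring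
  have hball : ∀ i : ℕ, volume (ball (h (a + (i:ℝ) * ε)) (((L:ℝ) + 1) * ε))
      = ENNReal.ofReal ((((L:ℝ) + 1) * ε) ^ 2) * B := by
    intro i
    have h5 := Measure.addHaar_ball (volume : Measure E2) (h (a + (i:ℝ) * ε))
      (r := ((L:ℝ) + 1) * ε) (by positivity)
    rwa [finrank_euclideanSpace_fin] at h5
  have hn1 : ((n:ℝ) + 1) ≤ (b - a + 2) / ε := by
    have hba : 0 ≤ (b - a) / ε := div_nonneg (by linarith) hε0.le
    have hc : (n:ℝ) < (b - a) / ε + 1 := Nat.ceil_lt_add_one hba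
    have h2ε : (2:ℝ) ≤ 2 / ε := by rw [le_div_iff₀ hε0]; linarith
    have he : (b - a + 2) / ε = (b - a) / ε + 2 / ε := by ring
    linarith
  calc volume (thickening ε (h '' Icc a b))
      ≤ ∑ i ∈ Finset.range (n + 1), volume (ball (h (a + (i:ℝ) * ε)) (((L:ℝ) + 1) * ε)) :=
        (measure_mono hcover).trans (measure_biUnion_finset_le _ _)
    _ = (↑(n + 1) : ℝ≥0∞) * (ENNReal.ofReal ((((L:ℝ) + 1) * ε) ^ 2) * B) := by
        rw [Finset.sum_congr rfl fun i _ => hball i, Finset.sum_const, Finset.card_range,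
          nsmul_eq_mul]
    _ = ENNReal.ofReal ((↑(n + 1) : ℝ) * ((((L:ℝ) + 1) * ε) ^ 2 * B.toReal)) := by
        symm
        rw [ENNReal.ofReal_mul (by positivity), ENNReal.ofReal_mul (by positivity),
          ENNReal.ofReal_natCast, ENNReal.ofReal_toReal hBfin]
    _ ≤ ENNReal.ofReal ((b - a + 2) * ((L:ℝ) + 1) ^ 2 * B.toReal * ε) := by
        apply ENNReal.ofReal_le_ofReal
        have hBnn : (0:ℝ) ≤ B.toReal := ENNReal.toReal_nonneg
        have hstep : ((n:ℝ) + 1) * ((((L:ℝ) + 1) * ε) ^ 2 * B.toReal)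
            ≤ ((b - a + 2) / ε) * ((((L:ℝ) + 1) * ε) ^ 2 * B.toReal) :=
          mul_le_mul_of_nonneg_right hn1 (by positivity)
        have heq : ((b - a + 2) / ε) * ((((L:ℝ) + 1) * ε) ^ 2 * B.toReal)
            = (b - a + 2) * ((L:ℝ) + 1) ^ 2 * B.toReal * ε := by
          field_simp
        calc (↑(n + 1) : ℝ) * ((((L:ℝ) + 1) * ε) ^ 2 * B.toReal)
            = ((n:ℝ) + 1) * ((((L:ℝ) + 1) * ε) ^ 2 * B.toReal) := by push_cast; ring
          _ ≤ ((b - a + 2) / ε) * ((((L:ℝ) + 1) * ε) ^ 2 * B.toReal) := hstep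
          _ = (b - a + 2) * ((L:ℝ) + 1) ^ 2 * B.toReal * ε := heq


end ExcisionAux

namespace ExcisionAux

lemma rayNbhd_mono {A B : Set E2} (hAB : A ⊆ B) (ε : ℝ) : rayNbhd ε A ⊆ rayNbhd ε B := by
  rintro y ⟨z, hz, ht, hd⟩
  exact ⟨z, hAB hz, ht, hd⟩

lemma rayNbhd_subset_thickening (ε : ℝ) (A : Set E2) : rayNbhd ε A ⊆ thickening ε A := by
  rintro y ⟨z, hz, _, hd⟩
  exact mem_thickening_iff.mpr ⟨z, hz, hd⟩

end ExcisionAux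


/-- **Lemma (excision property for simple smooth curves)**: removing an initial arc of a
bounded simple smooth curve of lower box dimension `> 1` changes neither the box dimensions
nor the Minkowski contents; analogously for the radial quantities. -/
theorem excision_property
    (φ₁ ov_φ₁ : ℝ) (hφ : φ₁ < ov_φ₁)
    (h : ℝ → E2)
    (hh_smooth : ContDiffOn ℝ 1 h (Set.Ici φ₁))
    (hh_inj : Set.InjOn h (Set.Ici φ₁))
    (hh_bdd : Bornology.IsBounded (h '' Set.Ici φ₁))
    (hdim : 1 < lowerDimB (h '' Set.Ici φ₁)) :
    (lowerDimB (h '' Set.Ioi ov_φ₁) = lowerDimB (h '' Set.Ici φ₁) ∧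
     upperDimB (h '' Set.Ioi ov_φ₁) = upperDimB (h '' Set.Ici φ₁) ∧
     lowerMink (lowerDimB (h '' Set.Ici φ₁)) (h '' Set.Ioi ov_φ₁) =
       lowerMink (lowerDimB (h '' Set.Ici φ₁)) (h '' Set.Ici φ₁) ∧
     upperMink (upperDimB (h '' Set.Ici φ₁)) (h '' Set.Ioi ov_φ₁) =
       upperMink (upperDimB (h '' Set.Ici φ₁)) (h '' Set.Ici φ₁)) ∧
    (1 < radLowerDimB (h '' Set.Ici φ₁) →
      radLowerDimB (h '' Set.Ioi ov_φ₁) = radLowerDimB (h '' Set.Ici φ₁) ∧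
      radUpperDimB (h '' Set.Ioi ov_φ₁) = radUpperDimB (h '' Set.Ici φ₁) ∧
      radLowerMink (radLowerDimB (h '' Set.Ici φ₁)) (h '' Set.Ioi ov_φ₁) =
        radLowerMink (radLowerDimB (h '' Set.Ici φ₁)) (h '' Set.Ici φ₁) ∧
      radUpperMink (radUpperDimB (h '' Set.Ici φ₁)) (h '' Set.Ioi ov_φ₁) =
        radUpperMink (radUpperDimB (h '' Set.Ici φ₁)) (h '' Set.Ici φ₁)) := by
  classical
  set Γ : Set E2 := h '' Set.Ici φ₁ with hΓdef
  set Γ₁ : Set E2 := h '' Set.Ioi ov_φ₁ with hΓ₁def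
  set K : Set E2 := h '' Set.Icc φ₁ ov_φ₁ with hKdef
  -- bridging equalities
  have elow : ∀ (A : Set E2) (s : ℝ), lowerMink s A =
      liminf (ExcisionAux.mq (fun ε => volume (thickening ε A)) s) (𝓝[>] (0:ℝ)) :=
    fun _ _ => rfl
  have eup : ∀ (A : Set E2) (s : ℝ), upperMink s A =
      limsup (ExcisionAux.mq (fun ε => volume (thickening ε A)) s) (𝓝[>] (0:ℝ)) :=
    fun _ _ => rfl
  have erlow : ∀ (A : Set E2) (s : ℝ), radLowerMink s A =
      liminf (ExcisionAux.mq (fun ε => volume (rayNbhd ε A)) s) (𝓝[>] (0:ℝ)) :=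
    fun _ _ => rfl
  have erup : ∀ (A : Set E2) (s : ℝ), radUpperMink s A =
      limsup (ExcisionAux.mq (fun ε => volume (rayNbhd ε A)) s) (𝓝[>] (0:ℝ)) :=
    fun _ _ => rfl
  -- Lipschitz bound for the initial arc
  have hIccsub : Set.Icc φ₁ ov_φ₁ ⊆ Set.Ici φ₁ := Set.Icc_subset_Ici_self
  have hcd : ContDiffOn ℝ 1 h (Set.Icc φ₁ ov_φ₁) := hh_smooth.mono hIccsub
  have hud : UniqueDiffOn ℝ (Set.Icc φ₁ ov_φ₁) := uniqueDiffOn_Icc hφ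
  have hdiff : DifferentiableOn ℝ h (Set.Icc φ₁ ov_φ₁) := hcd.differentiableOn one_ne_zero
  have hcont : ContinuousOn (derivWithin h (Set.Icc φ₁ ov_φ₁)) (Set.Icc φ₁ ov_φ₁) :=
    hcd.continuousOn_derivWithin hud le_rfl
  obtain ⟨B0, hB0⟩ := isCompact_Icc.exists_bound_of_continuousOn hcont
  have hlip : LipschitzOnWith B0.toNNReal h (Set.Icc φ₁ ov_φ₁) := by
    refine (convex_Icc _ _).lipschitzOnWith_of_nnnorm_derivWithin_le hdiff fun x hx => ?_
    rw [← norm_toNNReal]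
    exact Real.toNNReal_mono (hB0 x hx)
  obtain ⟨C, hC, hCb⟩ := ExcisionAux.volume_thickening_image_Icc_le hφ.le h B0.toNNReal hlip
  -- decomposition and inclusion
  have hdecomp : Γ = K ∪ Γ₁ := by
    rw [hKdef, hΓ₁def, hΓdef, ← Set.image_union, Set.Icc_union_Ioi_eq_Ici hφ.le]
  have hsub1 : Γ₁ ⊆ Γ := Set.image_mono fun x hx => le_of_lt (hφ.trans hx)
  -- bound
  set M : ℝ≥0∞ := volume (thickening 1 Γ) with hMdef
  have hMne : M ≠ ⊤ := hh_bdd.thickening.measure_lt_top.ne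
  -- thickening case
  have hdim' : 1 < sInf {s : ℝ | 0 ≤ s ∧
      liminf (ExcisionAux.mq (fun ε => volume (thickening ε Γ)) s) (𝓝[>] (0:ℝ)) = 0} := by
    have hd := hdim
    simp only [lowerDimB, elow] at hd
    exact hd
  have res1 := ExcisionAux.main_abstract
    (fun ε => volume (thickening ε Γ)) (fun ε => volume (thickening ε Γ₁))
    (fun ε => volume (thickening ε K)) hC
    (fun ε _ => measure_mono (thickening_subset_of_subset ε hsub1))
    (fun ε _ => by
      have hsp : volume (thickening ε Γ) ≤ volume (thickening ε Γ₁) + volume (thickening ε K) := by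
        rw [hdecomp, thickening_union]
        exact (measure_union_le _ _).trans (le_of_eq (add_comm _ _))
      exact hsp)
    hCb hMne
    (fun ε hε => measure_mono (thickening_mono hε.2.le Γ))
    hdim'
  have hup1 : 1 < upperDimB Γ := by
    simp only [upperDimB, eup]
    exact res1.2.2.2
  refine ⟨⟨?_, ?_, ?_, ?_⟩, ?_⟩
  · simp only [lowerDimB, elow]
    exact res1.2.1
  · simp only [upperDimB, eup]
    exact res1.2.2.1
  · rw [elow, elow]
    exact (res1.1 _ hdim).1
  · rw [eup, eup]
    exact (res1.1 _ hup1).2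
  -- radial case
  intro hrdim
  have hrdim' : 1 < sInf {s : ℝ | 0 ≤ s ∧
      liminf (ExcisionAux.mq (fun ε => volume (rayNbhd ε Γ)) s) (𝓝[>] (0:ℝ)) = 0} := by
    have hd := hrdim
    simp only [radLowerDimB, erlow] at hd
    exact hd
  have res2 := ExcisionAux.main_abstract
    (fun ε => volume (rayNbhd ε Γ)) (fun ε => volume (rayNbhd ε Γ₁))
    (fun ε => volume (thickening ε K)) hC
    (fun ε _ => measure_mono (ExcisionAux.rayNbhd_mono hsub1 ε))
    (fun ε _ => by
      have hss : rayNbhd ε Γ ⊆ rayNbhd ε Γ₁ ∪ thickening ε K := by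
        rintro y ⟨z, hz, ht, hd⟩
        rw [hdecomp] at hz
        rcases hz with hz | hz
        · exact Or.inr (mem_thickening_iff.mpr ⟨z, hz, hd⟩)
        · exact Or.inl ⟨z, hz, ht, hd⟩
      exact (measure_mono hss).trans (measure_union_le _ _))
    hCb hMne
    (fun ε hε => measure_mono ((ExcisionAux.rayNbhd_subset_thickening ε Γ).trans
      (thickening_mono hε.2.le Γ)))
    hrdim'
  have hup2 : 1 < radUpperDimB Γ := by
    simp only [radUpperDimB, erup]
    exact res2.2.2.2
  refine ⟨?_, ?_, ?_, ?_⟩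
  · simp only [radLowerDimB, erlow]
    exact res2.2.1
  · simp only [radUpperDimB, erup]
    exact res2.2.2.1
  · rw [erlow, erlow]
    exact (res2.1 _ hrdim).1
  · rw [erup, erup]
    exact (res2.1 _ hup2).2
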